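/- arXiv:1806.01777 — 3 statements merged into one kernel-verified Lean document; each statement's English description precedes it below -/
import Mathlib

section
/- Suppose two point vehicles move on a line with the front vehicle ahead by initial gap d₀, the front braking at constant deceleration a > 0 from speed V_f until it stops, and the rear continuing at accelerating up to speed V_m = V_r + τ·a_acc during the reaction time τ ≥ 0 and then braking at deceleration a until it stops. If T_f := V_f/a ≥ T_r := τ + V_m/a, and d₀ ≥ 0, then at every time t ≥ 0 the rear vehicle's total traveled distance never exceeds the front vehicle's traveled distance plus d₀, i.e., no collision occurs for any d₀ ≥ 0. -/
set_option maxHeartbeats 1000000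


theorem stmt_1 (a aacc Vf Vr τ d₀ Vm : ℝ)
    (ha : 0 < a) (hVf : 0 ≤ Vf) (hVr : 0 ≤ Vr) (hτ : 0 ≤ τ) (haacc : 0 ≤ aacc)
    (hd₀ : 0 ≤ d₀)
    (hVm : Vm = Vr + τ * aacc)
    (hT : τ + Vm / a ≤ Vf / a)
    (f r : ℝ → ℝ)
    (hf : ∀ t, f t = if t ≤ Vf / a then Vf * t - a * t ^ 2 / 2 else Vf ^ 2 / (2 * a))
    (hr : ∀ t, r t =
      if t ≤ τ then Vr * t + aacc * t ^ 2 / 2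
      else if t ≤ τ + Vm / a then
        Vr * τ + aacc * τ ^ 2 / 2 + Vm * (t - τ) - a * (t - τ) ^ 2 / 2
      else Vr * τ + aacc * τ ^ 2 / 2 + Vm ^ 2 / (2 * a)) :
    ∀ t, 0 ≤ t → r t ≤ f t + d₀ := by
  intro t ht
  have ha' : a ≠ 0 := ne_of_gt ha
  have hVm0 : 0 ≤ Vm := by nlinarith
  have hkey : a * τ + Vm ≤ Vf := by
    have := mul_le_mul_of_nonneg_left hT ha.le
    field_simp at this
    linarith
  rw [hf, hr]
  split_ifs with h1 h2 h3 h4 h5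
  · -- t ≤ τ, t ≤ Vf/a
    nlinarith [mul_nonneg ht (sub_nonneg.mpr h1), mul_nonneg haacc (mul_nonneg ht (sub_nonneg.mpr h1)), mul_nonneg ha.le (mul_nonneg ht (sub_nonneg.mpr h1))]
  · -- t ≤ τ but t > Vf/a : impossible since τ ≤ Vf/a? τ + Vm/a ≤ Vf/a and Vm/a ≥ 0
    exfalso
    have : Vm / a ≥ 0 := div_nonneg hVm0 ha.le
    have : τ ≤ Vf / a := by linarith
    exact h2 (le_trans h1 this)
  · -- τ < t ≤ τ + Vm/a, t ≤ Vf/a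
    have hs : 0 ≤ t - τ := by linarith
    nlinarith [mul_nonneg hs (sub_nonneg.mpr (le_of_not_ge h1) : 0 ≤ t - τ), mul_nonneg hs hs, mul_nonneg (sub_nonneg.mpr hkey) hs]
  · -- τ < t ≤ τ + Vm/a but t > Vf/a : impossible
    exfalso
    exact h4 (le_trans h3 hT)
  · -- t > τ + Vm/a, t ≤ Vf/a
    have h3' : τ + Vm / a < t := lt_of_not_ge h3
    have htVf : a * t ≤ Vf := by
      have := (le_div_iff₀ ha).mp h5; linarith
    set s : ℝ := τ + Vm / a with hs
    have hsa : a * s = a * τ + Vm := by rw [hs]; field_simp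
    have hsVf : a * s ≤ Vf := by rw [hsa]; exact hkey
    have hs0 : 0 ≤ s := add_nonneg hτ (div_nonneg hVm0 ha.le)
    have hfs : Vf*s - a*s^2/2 = (2*Vf*(a*τ+Vm) - (a*τ+Vm)^2)/(2*a) := by
      rw [hs]; field_simp
    clear_value s
    have hpoly : 2*a*Vr*τ + a*aacc*τ^2 + Vm^2 ≤ 2*Vf*(a*τ+Vm) - (a*τ+Vm)^2 := by
      nlinarith [mul_nonneg (add_nonneg (mul_nonneg ha.le hτ) hVm0) (sub_nonneg.mpr hkey),
        mul_nonneg (mul_nonneg ha.le haacc) (mul_nonneg hτ hτ),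
        mul_nonneg (mul_pos ha ha).le (mul_nonneg hτ hτ)]
    have hcapeq : Vr*τ + aacc*τ^2/2 + Vm^2/(2*a) = (2*a*Vr*τ + a*aacc*τ^2 + Vm^2)/(2*a) := by
      field_simp
    have hcap : Vr*τ + aacc*τ^2/2 + Vm^2/(2*a) ≤ Vf*s - a*s^2/2 := by
      rw [hcapeq, hfs]
      gcongr
    have hmono : Vf*s - a*s^2/2 ≤ Vf*t - a*t^2/2 := by
      have hprod : 0 ≤ (t - s) * (2*Vf - a*t - a*s) :=
        mul_nonneg (by linarith) (by linarith)
      nlinarith [hprod]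
    linarith
  · -- t > Vf/a
    have hpoly : 2*a*Vr*τ + a*aacc*τ^2 + Vm^2 ≤ Vf^2 := by
      nlinarith [mul_nonneg (sub_nonneg.mpr hkey) (by positivity : (0:ℝ) ≤ Vf + a*τ + Vm),
        mul_nonneg (mul_nonneg ha.le haacc) (mul_nonneg hτ hτ),
        mul_nonneg (mul_pos ha ha).le (mul_nonneg hτ hτ)]
    have hcapeq : Vr*τ + aacc*τ^2/2 + Vm^2/(2*a) = (2*a*Vr*τ + a*aacc*τ^2 + Vm^2)/(2*a) := by
      field_simp
    have hcap : Vr*τ + aacc*τ^2/2 + Vm^2/(2*a) ≤ Vf^2/(2*a) := by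
      rw [hcapeq]
      gcongr
    linarith
end

section
/- With stopping distances under best-effort reaction, if T_f < T_r, then the minimal initial gap guaranteeing the rear vehicle (after reaction time τ with worst-case acceleration, then full braking at rate a) never comes within distance L of the front vehicle (which brakes immediately at rate a from speed V_f) equals D = L + (1/2)(V_r + V_m)τ + V_m²/(2a) − V_f²/(2a), where V_m = V_r + τ·a_acc. -/
set_option maxHeartbeats 1000000 in

theorem stmt_2 (a aacc Vf Vr τ L Vm D : ℝ)
    (ha : 0 < a) (hVf : 0 ≤ Vf) (hVr : 0 ≤ Vr) (hτ : 0 ≤ τ) (haacc : 0 ≤ aacc)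
    (hVm : Vm = Vr + τ * aacc)
    (hT : Vf / a < τ + Vm / a)
    (hD : D = L + (1 / 2) * (Vr + Vm) * τ + Vm ^ 2 / (2 * a) - Vf ^ 2 / (2 * a))
    (hDL : L < D)
    (f r : ℝ → ℝ)
    (hf : ∀ t, f t = if t ≤ Vf / a then Vf * t - a * t ^ 2 / 2 else Vf ^ 2 / (2 * a))
    (hr : ∀ t, r t =
      if t ≤ τ then Vr * t + aacc * t ^ 2 / 2
      else if t ≤ τ + Vm / a then
        Vr * τ + aacc * τ ^ 2 / 2 + Vm * (t - τ) - a * (t - τ) ^ 2 / 2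
      else Vr * τ + aacc * τ ^ 2 / 2 + Vm ^ 2 / (2 * a)) :
    IsLeast {d : ℝ | ∀ t, 0 ≤ t → r t + L ≤ f t + d} D := by
  subst hVm
  have hVm0 : (0:ℝ) ≤ Vr + τ * aacc := by positivity
  have h2a : (0:ℝ) < 2 * a := by linarith
  have hV : Vf < a * τ + (Vr + τ * aacc) := by
    have h1 := (div_lt_iff₀ ha).mp hT
    rw [add_mul, div_mul_cancel₀ _ ha.ne'] at h1
    linarith
  have hE : 0 < a * (Vr + (Vr + τ * aacc)) * τ + (Vr + τ * aacc) ^ 2 - Vf ^ 2 := by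
    have h0 : 0 < (1/2) * (Vr + (Vr + τ * aacc)) * τ + (Vr + τ * aacc) ^ 2 / (2*a) - Vf ^ 2 / (2*a) := by
      rw [hD] at hDL; linarith
    have heq : 2*a*((1/2) * (Vr + (Vr + τ * aacc)) * τ + (Vr + τ * aacc) ^ 2 / (2*a) - Vf ^ 2 / (2*a))
        = a * (Vr + (Vr + τ * aacc)) * τ + (Vr + τ * aacc) ^ 2 - Vf ^ 2 := by field_simp
    nlinarith [mul_pos h2a h0]
  constructor
  · intro t ht
    rw [hf t, hr t, hD, ← sub_nonneg]
    split_ifs with hfa h1 h2 h1 h2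
    · -- t ≤ Vf/a, t ≤ τ
      have hta : a * t ≤ Vf := by
        have := (le_div_iff₀ ha).mp hfa; linarith [mul_comm t a]
      have hP : 0 ≤ a*(Vr+(Vr+τ*aacc))*τ + (Vr+τ*aacc)^2 - Vf^2 + 2*a*Vf*t - a^2*t^2 - 2*a*Vr*t - a*aacc*t^2 := by
        rcases le_total (a*τ) Vf with hm | hm
        · rcases hτ.eq_or_lt with h0 | h0
          · have ht0 : t = 0 := le_antisymm (h0 ▸ h1) ht
            subst ht0; rw [← h0] at hE ⊢; nlinarith [hE]
          · have hτP : 0 ≤ τ * (a*(Vr+(Vr+τ*aacc))*τ + (Vr+τ*aacc)^2 - Vf^2 + 2*a*Vf*t - a^2*t^2 - 2*a*Vr*t - a*aacc*t^2) := by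
              have c1 : 0 ≤ t * (((Vr+τ*aacc) - Vf + a*τ) * ((Vr+τ*aacc) + Vf - a*τ)) :=
                mul_nonneg ht (mul_nonneg (by linarith) (by nlinarith))
              have c2 : 0 ≤ (τ - t) * (a*(Vr+(Vr+τ*aacc))*τ + (Vr+τ*aacc)^2 - Vf^2) :=
                mul_nonneg (by linarith) hE.le
              have c3 : 0 ≤ (a^2 + a*aacc) * (τ * (t * (τ - t))) :=
                mul_nonneg (by positivity) (mul_nonneg hτ (mul_nonneg ht (by linarith)))
              nlinarith [c1, c2, c3]
            exact nonneg_of_mul_nonneg_right hτP h0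
        · rcases hVf.eq_or_lt with h0 | h0
          · have ht0 : t = 0 := le_antisymm (by nlinarith [h0 ▸ hta]) ht
            subst ht0; nlinarith [hE]
          · have haVf : 0 < a * Vf := mul_pos ha h0
            have hP2 : 0 ≤ (a*Vf) * (a*(Vr+(Vr+τ*aacc))*τ + (Vr+τ*aacc)^2 - Vf^2 + 2*a*Vf*t - a^2*t^2 - 2*a*Vr*t - a*aacc*t^2) := by
              have hK : 0 ≤ 2*a^2*Vr*(a*τ-Vf) + a*aacc*(a^2*τ^2-Vf^2) + a^2*(Vr+τ*aacc)^2 := by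
                nlinarith [mul_nonneg (mul_nonneg ha.le hVr) (sub_nonneg.2 hm),
                  mul_nonneg haacc (mul_nonneg (sub_nonneg.2 hm) (add_nonneg (mul_nonneg ha.le hτ) hVf)),
                  sq_nonneg (a*(Vr+τ*aacc))]
              have c1 : 0 ≤ t * (2*a^2*Vr*(a*τ-Vf) + a*aacc*(a^2*τ^2-Vf^2) + a^2*(Vr+τ*aacc)^2) := mul_nonneg ht hK
              have c2 : 0 ≤ (a*(Vf - a*t)) * (a*(Vr+(Vr+τ*aacc))*τ + (Vr+τ*aacc)^2 - Vf^2) :=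
                mul_nonneg (mul_nonneg ha.le (by linarith)) hE.le
              have c3 : 0 ≤ (a^2 + a*aacc) * (t * (Vf * (Vf - a*t))) :=
                mul_nonneg (by positivity) (mul_nonneg ht (mul_nonneg hVf (by linarith)))
              nlinarith [c1, c2, c3]
            exact nonneg_of_mul_nonneg_right hP2 haVf
      have heq : Vf * t - a * t ^ 2 / 2 + (L + 1 / 2 * (Vr + (Vr + τ * aacc)) * τ + (Vr + τ * aacc) ^ 2 / (2 * a) - Vf ^ 2 / (2 * a))
          - (Vr * t + aacc * t ^ 2 / 2 + L)
          = (a*(Vr+(Vr+τ*aacc))*τ + (Vr+τ*aacc)^2 - Vf^2 + 2*a*Vf*t - a^2*t^2 - 2*a*Vr*t - a*aacc*t^2) / (2*a) := by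
        field_simp; ring
      rw [heq]; exact div_nonneg hP h2a.le
    · -- t ≤ Vf/a, ¬ t ≤ τ, t ≤ τ + Vm/a
      have hta : a * t ≤ Vf := by
        have := (le_div_iff₀ ha).mp hfa; linarith [mul_comm t a]
      have htr : a * (t - τ) ≤ Vr + τ * aacc := by
        have h4 : t - τ ≤ (Vr + τ * aacc) / a := by linarith
        have := (le_div_iff₀ ha).mp h4; linarith [mul_comm (t - τ) a]
      have hP : 0 ≤ ((Vr+τ*aacc) - a*(t-τ))^2 - (Vf - a*t)^2 := by
        have h5 : 0 ≤ Vf - a*t := by linarith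
        have h6 : Vf - a*t ≤ (Vr+τ*aacc) - a*(t-τ) := by nlinarith
        nlinarith
      have heq : Vf * t - a * t ^ 2 / 2 + (L + 1 / 2 * (Vr + (Vr + τ * aacc)) * τ + (Vr + τ * aacc) ^ 2 / (2 * a) - Vf ^ 2 / (2 * a))
          - (Vr * τ + aacc * τ ^ 2 / 2 + (Vr + τ * aacc) * (t - τ) - a * (t - τ) ^ 2 / 2 + L)
          = (((Vr+τ*aacc) - a*(t-τ))^2 - (Vf - a*t)^2) / (2*a) := by
        field_simp; ring
      rw [heq]; exact div_nonneg hP h2a.le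
    · -- t ≤ Vf/a, ¬ t ≤ τ, ¬ t ≤ τ + Vm/a : impossible
      exact absurd (hfa.trans hT.le) h2
    · -- ¬ t ≤ Vf/a, t ≤ τ
      have hP : 0 ≤ a*(Vr+(Vr+τ*aacc))*τ + (Vr+τ*aacc)^2 - 2*a*Vr*t - a*aacc*t^2 := by
        nlinarith [mul_nonneg (mul_nonneg ha.le hVr) (sub_nonneg.2 h1),
          mul_nonneg (mul_nonneg ha.le haacc) (mul_nonneg (sub_nonneg.2 h1) (add_nonneg ht (ht.trans h1))),
          sq_nonneg (Vr+τ*aacc)]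
      have heq : Vf ^ 2 / (2 * a) + (L + 1 / 2 * (Vr + (Vr + τ * aacc)) * τ + (Vr + τ * aacc) ^ 2 / (2 * a) - Vf ^ 2 / (2 * a))
          - (Vr * t + aacc * t ^ 2 / 2 + L)
          = (a*(Vr+(Vr+τ*aacc))*τ + (Vr+τ*aacc)^2 - 2*a*Vr*t - a*aacc*t^2) / (2*a) := by
        field_simp; ring
      rw [heq]; exact div_nonneg hP h2a.le
    · -- ¬ t ≤ Vf/a, ¬ t ≤ τ, t ≤ τ + Vm/a
      have heq : Vf ^ 2 / (2 * a) + (L + 1 / 2 * (Vr + (Vr + τ * aacc)) * τ + (Vr + τ * aacc) ^ 2 / (2 * a) - Vf ^ 2 / (2 * a))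
          - (Vr * τ + aacc * τ ^ 2 / 2 + (Vr + τ * aacc) * (t - τ) - a * (t - τ) ^ 2 / 2 + L)
          = ((Vr+τ*aacc) - a*(t-τ))^2 / (2*a) := by
        field_simp; ring
      rw [heq]; positivity
    · -- ¬ t ≤ Vf/a, ¬ t ≤ τ, ¬ t ≤ τ + Vm/a : equality
      have heq : Vf ^ 2 / (2 * a) + (L + 1 / 2 * (Vr + (Vr + τ * aacc)) * τ + (Vr + τ * aacc) ^ 2 / (2 * a) - Vf ^ 2 / (2 * a))
          - (Vr * τ + aacc * τ ^ 2 / 2 + (Vr + τ * aacc) ^ 2 / (2 * a) + L) = 0 := by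
        field_simp; ring
      rw [heq]
  · intro d hd
    have hTr : (0:ℝ) ≤ τ + (Vr + τ * aacc) / a := by positivity
    have h := hd (τ + (Vr + τ * aacc) / a) hTr
    rw [hf _, hr _] at h
    have hnf : ¬ (τ + (Vr + τ * aacc) / a ≤ Vf / a) := not_le.mpr hT
    rw [if_neg hnf] at h
    by_cases hz : Vr + τ * aacc = 0
    · have hVr0 : Vr = 0 := by nlinarith [mul_nonneg hτ haacc]
      have hτa : τ * aacc = 0 := by nlinarith
      rw [hz] at h
      simp only [zero_div, add_zero, le_refl, if_pos] at h
      have e1 : aacc * τ ^ 2 = (τ * aacc) * τ := by ring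
      rw [hτa, zero_mul] at e1
      rw [hD, hz]
      rw [hVr0] at h ⊢
      nlinarith [h, e1]
    · have hVmp : 0 < Vr + τ * aacc := lt_of_le_of_ne hVm0 (Ne.symm hz)
      have hnr : ¬ (τ + (Vr + τ * aacc) / a ≤ τ) := by
        simp only [add_le_iff_nonpos_right, not_le]; positivity
      rw [if_neg hnr, if_pos (le_refl _)] at h
      have hcalc : (Vr + τ * aacc) * (τ + (Vr + τ * aacc) / a - τ) - a * (τ + (Vr + τ * aacc) / a - τ)^2 / 2
          = (Vr + τ * aacc)^2/(2*a) := by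
        field_simp; ring
      rw [hD]
      nlinarith [h, hcalc]
end

section
/- If the communication-corrected parameters satisfy 0 ≤ L_C ≤ L, 0 ≤ τ_C ≤ τ, V_fC ≥ V_f ≥ 0, and the corrected safe distance D_C uses (L_C, τ_C, V_fC) in place of (L, τ, V_f) in the formula D = L + (1/2)(2V_r + τ·a_acc)τ + (V_r + τ·a_acc)²/(2a) − V_f²/(2a), then D_C ≤ D. -/
theorem stmt_5 (a aacc Vr L τ Vf LC τC VfC : ℝ)
    (ha : 0 < a) (hVr : 0 ≤ Vr) (haacc : 0 ≤ aacc)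
    (hLC : 0 ≤ LC) (hLCL : LC ≤ L)
    (hτC : 0 ≤ τC) (hτCτ : τC ≤ τ)
    (hVf : 0 ≤ Vf) (hVfC : Vf ≤ VfC)
    (D : ℝ → ℝ → ℝ → ℝ)
    (hD : ∀ l t v, D l t v = l + (1 / 2) * (2 * Vr + t * aacc) * t
        + (Vr + t * aacc) ^ 2 / (2 * a) - v ^ 2 / (2 * a)) :
    D LC τC VfC ≤ D L τ Vf := by
  rw [hD, hD]
  have h1 : (1 / 2) * (2 * Vr + τC * aacc) * τC ≤ (1 / 2) * (2 * Vr + τ * aacc) * τ := by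
    nlinarith [mul_le_mul_of_nonneg_right hτCτ haacc, mul_le_mul hτCτ hτCτ hτC (le_trans hτC hτCτ)]
  have h2 : (Vr + τC * aacc) ^ 2 / (2 * a) ≤ (Vr + τ * aacc) ^ 2 / (2 * a) := by
    apply div_le_div_of_nonneg_right _ (by linarith)
    nlinarith [mul_le_mul_of_nonneg_right hτCτ haacc, mul_le_mul hτCτ hτCτ hτC (le_trans hτC hτCτ)]
  have h3 : Vf ^ 2 / (2 * a) ≤ VfC ^ 2 / (2 * a) := by
    apply div_le_div_of_nonneg_right _ (by linarith)
    nlinarith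
  linarith
end
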